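/- arXiv:1710.02261 — 4 statements merged into one kernel-verified Lean document; each statement's English description precedes it below -/
import Mathlib

section
/- Fix a mode n and a row index i_n ∈ {1,…,I_n}, and keep G, all factor matrices other than A^(n), and all rows of A^(n) other than row i_n fixed. Then there exists a constant C ∈ ℝ, not depending on the value of the i_n-th row, such that for every a ∈ ℝ^{J_n}, the Tucker loss with the i_n-th row of A^(n) set to a equals ∑_{i∈Ω^{(n)}_{i_n}} (X_i − ⟨a, δ^{(n)}_i⟩)² + λ ⟨a, a⟩ + C, where ⟨·,·⟩ denotes the Euclidean inner product on ℝ^{J_n}. (That is, the loss restricted to the i_n-th row has the ridge form built from the vectors δ^{(n)}_i computed with the fixed row set to a.) -/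
open Finset Matrix

/-- The Tucker loss (Equation (7)):
`L(G, A⁽¹⁾,…,A⁽ᴺ⁾) = ∑_{i∈Ω} (X_i − ∑_j G_j ∏_n A⁽ⁿ⁾_{iₙ jₙ})² + λ ∑_n ‖A⁽ⁿ⁾‖_F²`. -/
noncomputable def tuckerLoss {N : ℕ} (I J : Fin N → ℕ)
    (Ω : Finset ((k : Fin N) → Fin (I k)))
    (X : ((k : Fin N) → Fin (I k)) → ℝ)
    (G : ((k : Fin N) → Fin (J k)) → ℝ)
    (A : (n : Fin N) → Matrix (Fin (I n)) (Fin (J n)) ℝ)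
    (lam : ℝ) : ℝ :=
  (∑ i ∈ Ω,
      (X i - ∑ j : (k : Fin N) → Fin (J k), G j * ∏ n, A n (i n) (j n)) ^ 2)
    + lam * ∑ n, ∑ p, ∑ q, A n p q ^ 2

/-- The vector `δ⁽ⁿ⁾_i ∈ ℝ^{Jₙ}` (Equation (10)):
`δ⁽ⁿ⁾_i(j) = ∑_{j' : j'ₙ = j} G_{j'} ∏_{k≠n} A⁽ᵏ⁾_{iₖ j'ₖ}`. -/
noncomputable def deltaVec {N : ℕ} (I J : Fin N → ℕ)
    (G : ((k : Fin N) → Fin (J k)) → ℝ)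
    (A : (n : Fin N) → Matrix (Fin (I n)) (Fin (J n)) ℝ)
    (n : Fin N) (i : (k : Fin N) → Fin (I k)) : Fin (J n) → ℝ :=
  fun j =>
    ∑ j' ∈ Finset.univ.filter (fun j' : (k : Fin N) → Fin (J k) => j' n = j),
      G j' * ∏ k ∈ Finset.univ.erase n, A k (i k) (j' k)

/-- The matrix `B⁽ⁿ⁾_{iₙ} ∈ ℝ^{Jₙ×Jₙ}` (Equation (8)), whose `(j₁,j₂)` entry is
`∑_{i ∈ Ω⁽ⁿ⁾_{iₙ}} δ⁽ⁿ⁾_i(j₁) δ⁽ⁿ⁾_i(j₂)`. -/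
noncomputable def Bmat {N : ℕ} (I J : Fin N → ℕ)
    (Ω : Finset ((k : Fin N) → Fin (I k)))
    (G : ((k : Fin N) → Fin (J k)) → ℝ)
    (A : (n : Fin N) → Matrix (Fin (I n)) (Fin (J n)) ℝ)
    (n : Fin N) (r : Fin (I n)) : Matrix (Fin (J n)) (Fin (J n)) ℝ :=
  fun j1 j2 =>
    ∑ i ∈ Ω.filter (fun i => i n = r),
      deltaVec I J G A n i j1 * deltaVec I J G A n i j2

/-- The vector `c⁽ⁿ⁾_{iₙ} ∈ ℝ^{Jₙ}` (Equation (9)), whose `j`th entry is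
`∑_{i ∈ Ω⁽ⁿ⁾_{iₙ}} X_i δ⁽ⁿ⁾_i(j)`. -/
noncomputable def cvec {N : ℕ} (I J : Fin N → ℕ)
    (Ω : Finset ((k : Fin N) → Fin (I k)))
    (X : ((k : Fin N) → Fin (I k)) → ℝ)
    (G : ((k : Fin N) → Fin (J k)) → ℝ)
    (A : (n : Fin N) → Matrix (Fin (I n)) (Fin (J n)) ℝ)
    (n : Fin N) (r : Fin (I n)) : Fin (J n) → ℝ :=
  fun j => ∑ i ∈ Ω.filter (fun i => i n = r), X i * deltaVec I J G A n i j

/-- Fixing mode `n` and row `iₙ = r`, the Tucker loss as a function of the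
`r`-th row `a` of `A⁽ⁿ⁾` has the ridge form
`∑_{i∈Ω⁽ⁿ⁾_r} (X_i − ⟨a, δ⁽ⁿ⁾_i⟩)² + λ⟨a,a⟩ + C` for a constant `C` not depending on `a`. -/
theorem tucker_row_restriction_is_ridge
    (N : ℕ) (hN : 0 < N) (I J : Fin N → ℕ) (hI : ∀ k, 0 < I k) (hJ : ∀ k, 0 < J k)
    (Ω : Finset ((k : Fin N) → Fin (I k)))
    (X : ((k : Fin N) → Fin (I k)) → ℝ)
    (G : ((k : Fin N) → Fin (J k)) → ℝ)
    (A : (n : Fin N) → Matrix (Fin (I n)) (Fin (J n)) ℝ)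
    (lam : ℝ) (n : Fin N) (r : Fin (I n)) :
    ∃ C : ℝ, ∀ a : Fin (J n) → ℝ,
      tuckerLoss I J Ω X G (Function.update A n ((A n).updateRow r a)) lam
        = (∑ i ∈ Ω.filter (fun i => i n = r), (X i - a ⬝ᵥ deltaVec I J G A n i) ^ 2)
          + lam * (a ⬝ᵥ a) + C := by
  classical
  refine ⟨(∑ i ∈ Ω.filter (fun i => ¬ i n = r),
      (X i - ∑ j : (k : Fin N) → Fin (J k), G j * ∏ m, A m (i m) (j m)) ^ 2)
    + lam * ((∑ m ∈ Finset.univ.erase n, ∑ p, ∑ q, A m p q ^ 2)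
      + ∑ p ∈ Finset.univ.erase r, ∑ q, A n p q ^ 2), ?_⟩
  intro a
  set A' := Function.update A n ((A n).updateRow r a) with hA'def
  have hA'n : A' n = (A n).updateRow r a := Function.update_self _ _ _
  have hA'ne : ∀ m, m ≠ n → A' m = A m := fun m hm => Function.update_of_ne hm _ _
  have hprod_ne : ∀ (i : (k : Fin N) → Fin (I k)) (j : (k : Fin N) → Fin (J k)),
      ∏ m ∈ Finset.univ.erase n, A' m (i m) (j m)
        = ∏ m ∈ Finset.univ.erase n, A m (i m) (j m) := by
    intro i j
    exact Finset.prod_congr rfl fun m hm => by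
      rw [hA'ne m (Finset.ne_of_mem_erase hm)]
  -- residual on the fiber i n = r
  have hres : ∀ i ∈ Ω.filter (fun i => i n = r),
      (∑ j : (k : Fin N) → Fin (J k), G j * ∏ m, A' m (i m) (j m))
        = a ⬝ᵥ deltaVec I J G A n i := by
    intro i hi
    have hir : i n = r := (Finset.mem_filter.mp hi).2
    have step1 : ∀ j : (k : Fin N) → Fin (J k),
        G j * ∏ m, A' m (i m) (j m)
          = G j * (a (j n) * ∏ m ∈ Finset.univ.erase n, A m (i m) (j m)) := by
      intro j
      rw [← Finset.mul_prod_erase Finset.univ _ (Finset.mem_univ n), hprod_ne,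
        hA'n, hir, Matrix.updateRow_self]
    rw [Finset.sum_congr rfl fun j _ => step1 j]
    rw [dotProduct]
    unfold deltaVec
    rw [← Finset.sum_fiberwise Finset.univ (fun j : (k : Fin N) → Fin (J k) => j n)
      (fun j => G j * (a (j n) * ∏ m ∈ Finset.univ.erase n, A m (i m) (j m)))]
    refine Finset.sum_congr rfl fun jn _ => ?_
    rw [Finset.mul_sum]
    refine Finset.sum_congr rfl fun j hj => ?_
    have : j n = jn := (Finset.mem_filter.mp hj).2
    rw [this]; ring
  -- residual off the fiber
  have hres2 : ∀ i ∈ Ω.filter (fun i => ¬ i n = r),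
      (∑ j : (k : Fin N) → Fin (J k), G j * ∏ m, A' m (i m) (j m))
        = ∑ j : (k : Fin N) → Fin (J k), G j * ∏ m, A m (i m) (j m) := by
    intro i hi
    have hir : i n ≠ r := (Finset.mem_filter.mp hi).2
    refine Finset.sum_congr rfl fun j _ => ?_
    congr 1
    rw [← Finset.mul_prod_erase Finset.univ _ (Finset.mem_univ n), hprod_ne,
      ← Finset.mul_prod_erase Finset.univ (fun m => A m (i m) (j m)) (Finset.mem_univ n),
      hA'n, Matrix.updateRow_ne hir]
  -- regularization
  have hreg : (∑ m, ∑ p, ∑ q, A' m p q ^ 2)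
      = (a ⬝ᵥ a + ∑ p ∈ Finset.univ.erase r, ∑ q, A n p q ^ 2)
        + ∑ m ∈ Finset.univ.erase n, ∑ p, ∑ q, A m p q ^ 2 := by
    rw [← Finset.add_sum_erase Finset.univ _ (Finset.mem_univ n)]
    congr 1
    · rw [hA'n, ← Finset.add_sum_erase Finset.univ _ (Finset.mem_univ r)]
      congr 1
      · rw [Matrix.updateRow_self, dotProduct]
        exact Finset.sum_congr rfl fun q _ => (sq (a q))
      · refine Finset.sum_congr rfl fun p hp => ?_
        rw [Matrix.updateRow_ne (Finset.ne_of_mem_erase hp)]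
    · exact Finset.sum_congr rfl fun m hm => by
        rw [hA'ne m (Finset.ne_of_mem_erase hm)]
  unfold tuckerLoss
  rw [← Finset.sum_filter_add_sum_filter_not Ω (fun i => i n = r)
    (fun i => (X i - ∑ j : (k : Fin N) → Fin (J k), G j * ∏ m, A' m (i m) (j m)) ^ 2)]
  have e1 : (∑ i ∈ Ω.filter (fun i => i n = r),
      (X i - ∑ j : (k : Fin N) → Fin (J k), G j * ∏ m, A' m (i m) (j m)) ^ 2)
      = ∑ i ∈ Ω.filter (fun i => i n = r), (X i - a ⬝ᵥ deltaVec I J G A n i) ^ 2 :=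
    Finset.sum_congr rfl fun i hi => by rw [hres i hi]
  have e2 : (∑ i ∈ Ω.filter (fun i => ¬ i n = r),
      (X i - ∑ j : (k : Fin N) → Fin (J k), G j * ∏ m, A' m (i m) (j m)) ^ 2)
      = ∑ i ∈ Ω.filter (fun i => ¬ i n = r),
        (X i - ∑ j : (k : Fin N) → Fin (J k), G j * ∏ m, A m (i m) (j m)) ^ 2 :=
    Finset.sum_congr rfl fun i hi => by rw [hres2 i hi]
  rw [e1, e2, hreg]
  ring
end

section
/- (Correctness of P-Tucker, Theorem 1 of the paper.) Assume λ > 0, fix a mode n and a row index i_n ∈ {1,…,I_n}, and keep G, all factor matrices other than A^(n), and all rows of A^(n) other than row i_n fixed. Then the row a* = (B^{(n)}_{i_n} + λ I_{J_n})^{-1} c^{(n)}_{i_n} (where I_{J_n} is the J_n×J_n identity matrix, and B^{(n)}_{i_n}, c^{(n)}_{i_n} are computed from the fixed quantities) minimizes the Tucker loss L over all choices of the i_n-th row of A^(n): for every a ∈ ℝ^{J_n}, the loss with the i_n-th row set to a* is less than or equal to the loss with the i_n-th row set to a. -/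
open Finset Matrix

section QuadMin

variable {ι κ : Type*} [Fintype κ]

/-- Abstract ridge-regression minimization: if `astar` satisfies the normal equations,
it minimizes the regularized least squares objective. -/
lemma quad_min (S : Finset ι) (d : ι → κ → ℝ) (X : ι → ℝ) (lam : ℝ) (hlam : 0 ≤ lam)
    (astar : κ → ℝ)
    (hkey : ∀ q, (∑ i ∈ S, d i q * (∑ q', d i q' * astar q')) + lam * astar q
        = ∑ i ∈ S, X i * d i q) (a : κ → ℝ) :
    (∑ i ∈ S, (X i - ∑ q, d i q * astar q) ^ 2) + lam * ∑ q, astar q ^ 2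
      ≤ (∑ i ∈ S, (X i - ∑ q, d i q * a q) ^ 2) + lam * ∑ q, a q ^ 2 := by
  set u : κ → ℝ := fun q => a q - astar q with hu
  have hsplit : ∀ i, (∑ q, d i q * a q)
      = (∑ q, d i q * astar q) + (∑ q, d i q * u q) := by
    intro i
    rw [← Finset.sum_add_distrib]
    exact Finset.sum_congr rfl fun q _ => by simp only [hu]; ring
  -- cross term computation
  have hcross : (∑ i ∈ S, (X i - ∑ q', d i q' * astar q') * (∑ q, d i q * u q))
      = lam * ∑ q, astar q * u q := by
    have swap : (∑ i ∈ S, (X i - ∑ q', d i q' * astar q') * (∑ q, d i q * u q))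
        = ∑ q, ((∑ i ∈ S, X i * d i q)
            - (∑ i ∈ S, d i q * (∑ q', d i q' * astar q'))) * u q := by
      calc (∑ i ∈ S, (X i - ∑ q', d i q' * astar q') * (∑ q, d i q * u q))
          = ∑ i ∈ S, ∑ q, ((X i - ∑ q', d i q' * astar q') * d i q) * u q := by
            refine Finset.sum_congr rfl fun i _ => ?_
            rw [Finset.mul_sum]
            exact Finset.sum_congr rfl fun q _ => by ring
        _ = ∑ q, ∑ i ∈ S, ((X i - ∑ q', d i q' * astar q') * d i q) * u q :=
            Finset.sum_comm
        _ = ∑ q, ((∑ i ∈ S, X i * d i q)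
              - (∑ i ∈ S, d i q * (∑ q', d i q' * astar q'))) * u q := by
            refine Finset.sum_congr rfl fun q _ => ?_
            rw [← Finset.sum_sub_distrib, Finset.sum_mul]
            exact Finset.sum_congr rfl fun i _ => by ring
    rw [swap, Finset.mul_sum]
    refine Finset.sum_congr rfl fun q _ => ?_
    have := hkey q
    have h2 : (∑ i ∈ S, X i * d i q)
        - (∑ i ∈ S, d i q * (∑ q', d i q' * astar q')) = lam * astar q := by
      linarith
    rw [h2]; ring
  have h1 : (∑ i ∈ S, (X i - ∑ q, d i q * a q) ^ 2)
      = ∑ i ∈ S, ((X i - ∑ q, d i q * astar q) ^ 2 + (∑ q, d i q * u q) ^ 2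
          - 2 * ((X i - ∑ q', d i q' * astar q') * (∑ q, d i q * u q))) := by
    refine Finset.sum_congr rfl fun i _ => ?_
    rw [hsplit i]; ring
  have h2 : (∑ q, a q ^ 2)
      = ∑ q, (astar q ^ 2 + (u q ^ 2 + 2 * (astar q * u q))) := by
    refine Finset.sum_congr rfl fun q _ => ?_
    simp only [hu]; ring
  have hB : 0 ≤ ∑ i ∈ S, (∑ q, d i q * u q) ^ 2 :=
    Finset.sum_nonneg fun _ _ => sq_nonneg _
  have hU : 0 ≤ ∑ q, u q ^ 2 := Finset.sum_nonneg fun _ _ => sq_nonneg _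
  have h3 : (∑ i ∈ S, 2 * ((X i - ∑ q', d i q' * astar q') * (∑ q, d i q * u q)))
      = 2 * (lam * ∑ q, astar q * u q) := by
    rw [← Finset.mul_sum, hcross]
  have h4 : (∑ q, 2 * (astar q * u q)) = 2 * ∑ q, astar q * u q := by
    rw [← Finset.mul_sum]
  rw [h1, h2, Finset.sum_sub_distrib, Finset.sum_add_distrib, h3,
    Finset.sum_add_distrib, Finset.sum_add_distrib, h4]
  have hlu := mul_nonneg hlam hU
  nlinarith [hB, hU, hlu]

end QuadMin

section Gram

variable {ι κ : Type*} [Fintype κ] [DecidableEq κ]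

set_option linter.unusedSectionVars false

lemma gram_swap (S : Finset ι) (d : ι → κ → ℝ) (x : κ → ℝ) (q1 : κ) :
    (∑ q2, (∑ i ∈ S, d i q1 * d i q2) * x q2)
      = ∑ i ∈ S, d i q1 * (∑ q2, d i q2 * x q2) := by
  calc (∑ q2, (∑ i ∈ S, d i q1 * d i q2) * x q2)
      = ∑ q2, ∑ i ∈ S, d i q1 * (d i q2 * x q2) := by
        refine Finset.sum_congr rfl fun q2 _ => ?_
        rw [Finset.sum_mul]
        exact Finset.sum_congr rfl fun i _ => by ring
    _ = ∑ i ∈ S, ∑ q2, d i q1 * (d i q2 * x q2) := Finset.sum_comm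
    _ = ∑ i ∈ S, d i q1 * (∑ q2, d i q2 * x q2) := by
        refine Finset.sum_congr rfl fun i _ => ?_
        rw [Finset.mul_sum]

lemma gram_mulVec (S : Finset ι) (d : ι → κ → ℝ) (lam : ℝ) (x : κ → ℝ) (q1 : κ) :
    ((Matrix.of (fun q1 q2 => ∑ i ∈ S, d i q1 * d i q2)
        + lam • (1 : Matrix κ κ ℝ)) *ᵥ x) q1
      = (∑ i ∈ S, d i q1 * (∑ q2, d i q2 * x q2)) + lam * x q1 := by
  have h1 : ((Matrix.of (fun q1 q2 => ∑ i ∈ S, d i q1 * d i q2)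
        + lam • (1 : Matrix κ κ ℝ)) *ᵥ x) q1
      = (∑ q2, (∑ i ∈ S, d i q1 * d i q2) * x q2)
        + ∑ q2, (lam * (if q1 = q2 then 1 else 0)) * x q2 := by
    simp only [Matrix.mulVec, dotProduct, Matrix.add_apply, Matrix.smul_apply,
      Matrix.one_apply, Matrix.of_apply, smul_eq_mul, add_mul, Finset.sum_add_distrib]
  rw [h1, gram_swap]
  congr 1
  simp [mul_ite, ite_mul, Finset.sum_ite_eq]

lemma gram_quadform (S : Finset ι) (d : ι → κ → ℝ) (x : κ → ℝ) :
    (∑ q1, x q1 * (∑ i ∈ S, d i q1 * (∑ q2, d i q2 * x q2)))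
      = ∑ i ∈ S, (∑ q, d i q * x q) ^ 2 := by
  calc (∑ q1, x q1 * (∑ i ∈ S, d i q1 * (∑ q2, d i q2 * x q2)))
      = ∑ q1, ∑ i ∈ S, x q1 * (d i q1 * (∑ q2, d i q2 * x q2)) := by
        exact Finset.sum_congr rfl fun q1 _ => Finset.mul_sum _ _ _
    _ = ∑ i ∈ S, ∑ q1, x q1 * (d i q1 * (∑ q2, d i q2 * x q2)) := Finset.sum_comm
    _ = ∑ i ∈ S, (∑ q, d i q * x q) ^ 2 := by
        refine Finset.sum_congr rfl fun i _ => ?_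
        rw [sq, Finset.sum_mul]
        exact Finset.sum_congr rfl fun q _ => by ring

lemma gram_posDef (S : Finset ι) (d : ι → κ → ℝ) (lam : ℝ) (hlam : 0 < lam) :
    (Matrix.of (fun q1 q2 => ∑ i ∈ S, d i q1 * d i q2)
      + lam • (1 : Matrix κ κ ℝ)).PosDef := by
  refine Matrix.PosDef.of_dotProduct_mulVec_pos ?_ ?_
  · show _ᴴ = _
    ext q1 q2
    simp only [Matrix.conjTranspose_apply, Matrix.add_apply, Matrix.smul_apply,
      Matrix.one_apply, Matrix.of_apply, smul_eq_mul, star_trivial]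
    congr 1
    · exact Finset.sum_congr rfl fun i _ => mul_comm _ _
    · simp [eq_comm]
  · intro x hx
    have hexp : star x ⬝ᵥ ((Matrix.of (fun q1 q2 => ∑ i ∈ S, d i q1 * d i q2)
        + lam • (1 : Matrix κ κ ℝ)) *ᵥ x)
        = (∑ i ∈ S, (∑ q, d i q * x q) ^ 2) + lam * ∑ q, x q ^ 2 := by
      simp only [star_trivial, dotProduct]
      calc (∑ q1, x q1 * ((Matrix.of (fun q1 q2 => ∑ i ∈ S, d i q1 * d i q2)
            + lam • (1 : Matrix κ κ ℝ)) *ᵥ x) q1)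
          = ∑ q1, (x q1 * (∑ i ∈ S, d i q1 * (∑ q2, d i q2 * x q2))
              + lam * x q1 ^ 2) := by
            refine Finset.sum_congr rfl fun q1 _ => ?_
            rw [gram_mulVec]; ring
        _ = (∑ i ∈ S, (∑ q, d i q * x q) ^ 2) + lam * ∑ q, x q ^ 2 := by
            rw [Finset.sum_add_distrib, gram_quadform, Finset.mul_sum]
    rw [hexp]
    obtain ⟨q0, hq0⟩ := Function.ne_iff.mp hx
    have h1 : 0 < ∑ q, x q ^ 2 := by
      refine Finset.sum_pos' (fun q _ => sq_nonneg _) ⟨q0, Finset.mem_univ _, ?_⟩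
      exact lt_of_le_of_ne (sq_nonneg _) (Ne.symm (pow_ne_zero 2 hq0))
    have h2 : 0 ≤ ∑ i ∈ S, (∑ q, d i q * x q) ^ 2 :=
      Finset.sum_nonneg fun _ _ => sq_nonneg _
    positivity

lemma gram_normal_eq (S : Finset ι) (d : ι → κ → ℝ) (X : ι → ℝ) (lam : ℝ)
    (hlam : 0 < lam) (astar : κ → ℝ) (Bm : Matrix κ κ ℝ) (cv : κ → ℝ)
    (hBm : Bm = Matrix.of (fun q1 q2 => ∑ i ∈ S, d i q1 * d i q2))
    (hcv : cv = fun q => ∑ i ∈ S, X i * d i q)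
    (hastar : astar = (Bm + lam • (1 : Matrix κ κ ℝ))⁻¹ *ᵥ cv) :
    ∀ q, (∑ i ∈ S, d i q * (∑ q', d i q' * astar q')) + lam * astar q
      = ∑ i ∈ S, X i * d i q := by
  set M : Matrix κ κ ℝ := Matrix.of (fun q1 q2 => ∑ i ∈ S, d i q1 * d i q2)
    + lam • (1 : Matrix κ κ ℝ) with hM
  subst hBm hcv
  have hpd : M.PosDef := gram_posDef S d lam hlam
  have hdet : IsUnit M.det := hpd.det_pos.ne'.isUnit
  have hMv : M *ᵥ astar = fun q => ∑ i ∈ S, X i * d i q := by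
    rw [hastar, Matrix.mulVec_mulVec, Matrix.mul_nonsing_inv _ hdet, Matrix.one_mulVec]
  intro q
  have h := congrFun hMv q
  rw [← h, hM]
  exact (gram_mulVec S d lam astar q).symm

end Gram


lemma tucker_loss_decomp {N : ℕ} (I J : Fin N → ℕ)
    (Ω : Finset ((k : Fin N) → Fin (I k)))
    (X : ((k : Fin N) → Fin (I k)) → ℝ)
    (G : ((k : Fin N) → Fin (J k)) → ℝ)
    (A : (n : Fin N) → Matrix (Fin (I n)) (Fin (J n)) ℝ)
    (lam : ℝ) (n : Fin N) (r : Fin (I n)) (a : Fin (J n) → ℝ) :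
    tuckerLoss I J Ω X G (Function.update A n ((A n).updateRow r a)) lam
      = (((∑ i ∈ Ω.filter fun i => i n = r,
            (X i - ∑ q, deltaVec I J G A n i q * a q) ^ 2) + lam * ∑ q, a q ^ 2))
        + (((∑ i ∈ Ω.filter fun i => ¬ i n = r,
            (X i - ∑ j : (k : Fin N) → Fin (J k), G j * ∏ k, A k (i k) (j k)) ^ 2)
          + lam * ((∑ p ∈ Finset.univ.erase r, ∑ q, A n p q ^ 2)
            + ∑ m ∈ Finset.univ.erase n, ∑ p, ∑ q, A m p q ^ 2))) := by
  set A' := Function.update A n ((A n).updateRow r a) with hA'def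
  have hAk : ∀ k, k ≠ n → A' k = A k := fun k hk => Function.update_of_ne hk _ _
  have hAn : A' n = (A n).updateRow r a := Function.update_self _ _ _
  have hS1 : (∑ i ∈ Ω.filter fun i => i n = r,
        (X i - ∑ j : (k : Fin N) → Fin (J k), G j * ∏ k, A' k (i k) (j k)) ^ 2)
      = ∑ i ∈ Ω.filter fun i => i n = r,
        (X i - ∑ q, deltaVec I J G A n i q * a q) ^ 2 := by
    refine Finset.sum_congr rfl fun i hi => ?_
    have hir : i n = r := (Finset.mem_filter.mp hi).2
    have hinner : (∑ j : (k : Fin N) → Fin (J k), G j * ∏ k, A' k (i k) (j k))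
        = ∑ q, deltaVec I J G A n i q * a q := by
      rw [← Finset.sum_fiberwise Finset.univ (fun j : (k : Fin N) → Fin (J k) => j n)
        (fun j => G j * ∏ k, A' k (i k) (j k))]
      refine Finset.sum_congr rfl fun q _ => ?_
      rw [deltaVec, Finset.sum_mul]
      refine Finset.sum_congr rfl fun j hj => ?_
      have hjn : j n = q := (Finset.mem_filter.mp hj).2
      rw [← Finset.mul_prod_erase Finset.univ _ (Finset.mem_univ n)]
      have h1 : A' n (i n) (j n) = a q := by
        rw [hAn, hir, hjn, Matrix.updateRow_self]
      have h2 : (∏ k ∈ Finset.univ.erase n, A' k (i k) (j k))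
          = ∏ k ∈ Finset.univ.erase n, A k (i k) (j k) :=
        Finset.prod_congr rfl fun k hk => by rw [hAk k (Finset.mem_erase.mp hk).1]
      rw [h1, h2]; ring
    rw [hinner]
  have hS2 : (∑ i ∈ Ω.filter fun i => ¬ i n = r,
        (X i - ∑ j : (k : Fin N) → Fin (J k), G j * ∏ k, A' k (i k) (j k)) ^ 2)
      = ∑ i ∈ Ω.filter fun i => ¬ i n = r,
        (X i - ∑ j : (k : Fin N) → Fin (J k), G j * ∏ k, A k (i k) (j k)) ^ 2 := by
    refine Finset.sum_congr rfl fun i hi => ?_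
    have hir : ¬ i n = r := (Finset.mem_filter.mp hi).2
    congr 2
    refine Finset.sum_congr rfl fun j _ => ?_
    congr 1
    refine Finset.prod_congr rfl fun k _ => ?_
    by_cases hk : k = n
    · subst hk
      rw [hAn, Matrix.updateRow_ne hir]
    · rw [hAk k hk]
  have hF : (∑ m, ∑ p, ∑ q, A' m p q ^ 2)
      = (∑ q, a q ^ 2) + ((∑ p ∈ Finset.univ.erase r, ∑ q, A n p q ^ 2)
        + ∑ m ∈ Finset.univ.erase n, ∑ p, ∑ q, A m p q ^ 2) := by
    rw [← Finset.add_sum_erase _ _ (Finset.mem_univ n)]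
    have hrest : (∑ m ∈ Finset.univ.erase n, ∑ p, ∑ q, A' m p q ^ 2)
        = ∑ m ∈ Finset.univ.erase n, ∑ p, ∑ q, A m p q ^ 2 :=
      Finset.sum_congr rfl fun m hm => by rw [hAk m (Finset.mem_erase.mp hm).1]
    have hn : (∑ p, ∑ q, A' n p q ^ 2)
        = (∑ q, a q ^ 2) + ∑ p ∈ Finset.univ.erase r, ∑ q, A n p q ^ 2 := by
      rw [hAn, ← Finset.add_sum_erase _ _ (Finset.mem_univ r)]
      congr 1
      · refine Finset.sum_congr rfl fun q _ => ?_
        rw [Matrix.updateRow_self]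
      · refine Finset.sum_congr rfl fun p hp => ?_
        refine Finset.sum_congr rfl fun q _ => ?_
        rw [Matrix.updateRow_ne (Finset.mem_erase.mp hp).1]
    rw [hrest, hn]
    ring
  rw [tuckerLoss, ← Finset.sum_filter_add_sum_filter_not Ω (fun i => i n = r),
    hS1, hS2, hF]
  ring

/-- Correctness of P-Tucker, Theorem 1: for `λ > 0`, the row
`a* = (B⁽ⁿ⁾_r + λ I)⁻¹ c⁽ⁿ⁾_r` minimizes the Tucker loss over all choices of the
`r`-th row of `A⁽ⁿ⁾`, everything else fixed. -/
theorem ptucker_row_update_correct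
    (N : ℕ) (hN : 0 < N) (I J : Fin N → ℕ) (hI : ∀ k, 0 < I k) (hJ : ∀ k, 0 < J k)
    (Ω : Finset ((k : Fin N) → Fin (I k)))
    (X : ((k : Fin N) → Fin (I k)) → ℝ)
    (G : ((k : Fin N) → Fin (J k)) → ℝ)
    (A : (n : Fin N) → Matrix (Fin (I n)) (Fin (J n)) ℝ)
    (lam : ℝ) (hlam : 0 < lam) (n : Fin N) (r : Fin (I n))
    (astar : Fin (J n) → ℝ)
    (hastar : astar =
      (Bmat I J Ω G A n r + lam • (1 : Matrix (Fin (J n)) (Fin (J n)) ℝ))⁻¹.mulVec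
        (cvec I J Ω X G A n r)) :
    ∀ a : Fin (J n) → ℝ,
      tuckerLoss I J Ω X G (Function.update A n ((A n).updateRow r astar)) lam
        ≤ tuckerLoss I J Ω X G (Function.update A n ((A n).updateRow r a)) lam := by
  intro a
  rw [tucker_loss_decomp, tucker_loss_decomp]
  have hBc : Bmat I J Ω G A n r = Matrix.of (fun q1 q2 =>
      ∑ i ∈ Ω.filter (fun i => i n = r),
        deltaVec I J G A n i q1 * deltaVec I J G A n i q2) := rfl
  have hcv : cvec I J Ω X G A n r = fun q =>
      ∑ i ∈ Ω.filter (fun i => i n = r), X i * deltaVec I J G A n i q := rfl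
  have hkey := gram_normal_eq (Ω.filter fun i => i n = r)
    (fun i => deltaVec I J G A n i) X lam hlam astar
    (Bmat I J Ω G A n r) (cvec I J Ω X G A n r) hBc hcv hastar
  have hq := quad_min (Ω.filter fun i => i n = r)
    (fun i => deltaVec I J G A n i) X lam hlam.le astar hkey a
  linarith
end

section
/- (Monotonicity of a row update.) Assume λ > 0, fix a mode n and a row index i_n ∈ {1,…,I_n}, and let A'^(n) be obtained from A^(n) by replacing its i_n-th row with a* = (B^{(n)}_{i_n} + λ I_{J_n})^{-1} c^{(n)}_{i_n}, leaving all other rows unchanged. Then L(G, A^(1),…, A'^(n), …, A^(N)) ≤ L(G, A^(1),…, A^(n), …, A^(N)); the row-wise update never increases the Tucker loss. -/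
open Finset Matrix

/- ------------------ auxiliary lemmas ------------------ -/

private lemma sq_sum_pos {m : ℕ} (x : Fin m → ℝ) (hx : x ≠ 0) :
    0 < ∑ j, x j ^ 2 := by
  obtain ⟨j0, hj0⟩ : ∃ j, x j ≠ 0 := by
    by_contra h; push_neg at h; exact hx (funext h)
  calc (0:ℝ) < x j0 ^ 2 := by positivity
    _ ≤ ∑ j, x j ^ 2 :=
      Finset.single_le_sum (f := fun j => x j ^ 2) (fun j _ => sq_nonneg _)
        (Finset.mem_univ j0)

private lemma dot_gram {m : ℕ} {ι : Type*} (s : Finset ι) (d : ι → Fin m → ℝ)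
    (x : Fin m → ℝ) :
    x ⬝ᵥ Matrix.mulVec (Matrix.of fun j1 j2 => ∑ i ∈ s, d i j1 * d i j2) x
      = ∑ i ∈ s, (∑ j, x j * d i j) ^ 2 := by
  simp only [dotProduct, mulVec, Matrix.of_apply, Finset.sum_mul, Finset.mul_sum, pow_two,
    Finset.sum_mul_sum]
  rw [Finset.sum_comm]
  have h1 : ∀ y : Fin m, ∑ x1 : Fin m, ∑ i ∈ s, x x1 * (d i x1 * d i y * x y)
      = ∑ i ∈ s, ∑ x1 : Fin m, x x1 * (d i x1 * d i y * x y) := fun y => Finset.sum_comm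
  rw [Finset.sum_congr rfl fun y _ => h1 y, Finset.sum_comm]
  refine Finset.sum_congr rfl fun a _ => Finset.sum_congr rfl fun y _ =>
    Finset.sum_congr rfl fun z _ => by ring

private lemma quad_min_s9 {m : ℕ} (M : Matrix (Fin m) (Fin m) ℝ) (hM : Mᵀ = M)
    (hPSD : ∀ v : Fin m → ℝ, 0 ≤ v ⬝ᵥ M.mulVec v) (c a astar : Fin m → ℝ)
    (h : M.mulVec astar = c) :
    astar ⬝ᵥ M.mulVec astar - 2 * (astar ⬝ᵥ c) ≤ a ⬝ᵥ M.mulVec a - 2 * (a ⬝ᵥ c) := by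
  have key := hPSD (a - astar)
  have h1 : a ⬝ᵥ M.mulVec astar = a ⬝ᵥ c := by rw [h]
  have h2 : astar ⬝ᵥ M.mulVec a = a ⬝ᵥ c := by
    rw [Matrix.dotProduct_mulVec, ← hM, Matrix.vecMul_transpose, h,
      dotProduct_comm]
  have h3 : astar ⬝ᵥ M.mulVec astar = astar ⬝ᵥ c := by rw [h]
  have hexp : (a - astar) ⬝ᵥ M.mulVec (a - astar)
      = a ⬝ᵥ M.mulVec a - a ⬝ᵥ M.mulVec astar - astar ⬝ᵥ M.mulVec a
        + astar ⬝ᵥ M.mulVec astar := by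
    rw [Matrix.mulVec_sub, sub_dotProduct, dotProduct_sub,
      dotProduct_sub]
    ring
  rw [hexp, h1, h2, h3] at key
  linarith

private lemma model_split {N : ℕ} (I J : Fin N → ℕ)
    (G : ((k : Fin N) → Fin (J k)) → ℝ)
    (A : (n : Fin N) → Matrix (Fin (I n)) (Fin (J n)) ℝ)
    (n : Fin N) (i : (k : Fin N) → Fin (I k)) :
    ∑ j : (k : Fin N) → Fin (J k), G j * ∏ k, A k (i k) (j k)
      = ∑ jn : Fin (J n), A n (i n) jn * deltaVec I J G A n i jn := by
  classical
  unfold deltaVec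
  rw [← Finset.sum_fiberwise Finset.univ (fun j : (k : Fin N) → Fin (J k) => j n)
    (fun j => G j * ∏ k, A k (i k) (j k))]
  refine Finset.sum_congr rfl fun jn _ => ?_
  rw [Finset.mul_sum]
  refine Finset.sum_congr rfl fun j hj => ?_
  simp only [Finset.mem_filter] at hj
  rw [← Finset.mul_prod_erase Finset.univ _ (Finset.mem_univ n), hj.2]
  ring

private lemma deltaVec_update {N : ℕ} (I J : Fin N → ℕ)
    (G : ((k : Fin N) → Fin (J k)) → ℝ)
    (A : (n : Fin N) → Matrix (Fin (I n)) (Fin (J n)) ℝ)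
    (n : Fin N) (r : Fin (I n)) (a : Fin (J n) → ℝ)
    (i : (k : Fin N) → Fin (I k)) :
    deltaVec I J G (Function.update A n ((A n).updateRow r a)) n i
      = deltaVec I J G A n i := by
  classical
  funext j
  unfold deltaVec
  refine Finset.sum_congr rfl fun j' _ => ?_
  congr 1
  refine Finset.prod_congr rfl fun k hk => ?_
  rw [Function.update_of_ne (Finset.ne_of_mem_erase hk)]

/-- Monotonicity of a row update: for `λ > 0`, replacing the `r`-th row of
`A⁽ⁿ⁾` by `a* = (B⁽ⁿ⁾_r + λ I)⁻¹ c⁽ⁿ⁾_r` never increases the Tucker loss. -/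
theorem ptucker_row_update_monotone
    (N : ℕ) (hN : 0 < N) (I J : Fin N → ℕ) (hI : ∀ k, 0 < I k) (hJ : ∀ k, 0 < J k)
    (Ω : Finset ((k : Fin N) → Fin (I k)))
    (X : ((k : Fin N) → Fin (I k)) → ℝ)
    (G : ((k : Fin N) → Fin (J k)) → ℝ)
    (A : (n : Fin N) → Matrix (Fin (I n)) (Fin (J n)) ℝ)
    (lam : ℝ) (hlam : 0 < lam) (n : Fin N) (r : Fin (I n))
    (astar : Fin (J n) → ℝ)
    (hastar : astar =
      (Bmat I J Ω G A n r + lam • (1 : Matrix (Fin (J n)) (Fin (J n)) ℝ))⁻¹.mulVec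
        (cvec I J Ω X G A n r))
    (A' : (n : Fin N) → Matrix (Fin (I n)) (Fin (J n)) ℝ)
    (hA' : A' = Function.update A n ((A n).updateRow r astar)) :
    tuckerLoss I J Ω X G A' lam ≤ tuckerLoss I J Ω X G A lam := by
  classical
  set B := Bmat I J Ω G A n r with hBdef
  set c := cvec I J Ω X G A n r with hcdef
  set M := B + lam • (1 : Matrix (Fin (J n)) (Fin (J n)) ℝ) with hMdef
  set δ := fun i => deltaVec I J G A n i with hδdef
  set Ωr := Ω.filter (fun i => i n = r) with hΩr
  -- the loss as a function of the replaced row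
  set C : ℝ :=
    (∑ i ∈ Ω.filter (fun i => ¬ i n = r),
        (X i - ∑ j : (k : Fin N) → Fin (J k), G j * ∏ k, A k (i k) (j k)) ^ 2)
      + lam * ((∑ m ∈ Finset.univ.erase n, ∑ p, ∑ q, A m p q ^ 2)
          + ∑ p ∈ Finset.univ.erase r, ∑ q, A n p q ^ 2) with hC
  have decomp : ∀ a : Fin (J n) → ℝ,
      tuckerLoss I J Ω X G (Function.update A n ((A n).updateRow r a)) lam
        = ((∑ i ∈ Ωr, (X i - ∑ jn, a jn * δ i jn) ^ 2) + lam * ∑ q, a q ^ 2) + C := by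
    intro a
    set A'' := Function.update A n ((A n).updateRow r a) with hA''
    unfold tuckerLoss
    have hres : ∑ i ∈ Ω,
        (X i - ∑ j : (k : Fin N) → Fin (J k), G j * ∏ k, A'' k (i k) (j k)) ^ 2
        = (∑ i ∈ Ωr, (X i - ∑ jn, a jn * δ i jn) ^ 2)
          + ∑ i ∈ Ω.filter (fun i => ¬ i n = r),
              (X i - ∑ j : (k : Fin N) → Fin (J k), G j * ∏ k, A k (i k) (j k)) ^ 2 := by
      rw [← Finset.sum_filter_add_sum_filter_not Ω (fun i => i n = r)]
      congr 1
      · refine Finset.sum_congr rfl fun i hi => ?_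
        have hir : i n = r := (Finset.mem_filter.mp hi).2
        rw [model_split I J G A'' n i, hA'', deltaVec_update]
        congr 2
        refine Finset.sum_congr rfl fun jn _ => ?_
        congr 1
        rw [Function.update_self, hir]
        simp [Matrix.updateRow_self]
      · refine Finset.sum_congr rfl fun i hi => ?_
        have hir : ¬ i n = r := (Finset.mem_filter.mp hi).2
        congr 2
        refine Finset.sum_congr rfl fun j _ => ?_
        congr 1
        refine Finset.prod_congr rfl fun k _ => ?_
        by_cases hk : k = n
        · subst hk
          rw [hA'', Function.update_self, Matrix.updateRow_ne hir]
        · rw [hA'', Function.update_of_ne hk]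
    have hreg : ∑ m, ∑ p, ∑ q, A'' m p q ^ 2
        = (∑ q, a q ^ 2) + ((∑ m ∈ Finset.univ.erase n, ∑ p, ∑ q, A m p q ^ 2)
            + ∑ p ∈ Finset.univ.erase r, ∑ q, A n p q ^ 2) := by
      rw [← Finset.sum_erase_add Finset.univ _ (Finset.mem_univ n)]
      have h1 : ∀ m ∈ Finset.univ.erase n,
          ∑ p, ∑ q, A'' m p q ^ 2 = ∑ p, ∑ q, A m p q ^ 2 := fun m hm => by
        rw [hA'', Function.update_of_ne (Finset.ne_of_mem_erase hm)]
      rw [Finset.sum_congr rfl h1]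
      have h2 : ∑ p, ∑ q, A'' n p q ^ 2
          = (∑ p ∈ Finset.univ.erase r, ∑ q, A n p q ^ 2) + ∑ q, a q ^ 2 := by
        rw [hA'', Function.update_self,
          ← Finset.sum_erase_add Finset.univ _ (Finset.mem_univ r)]
        congr 1
        · refine Finset.sum_congr rfl fun p hp => ?_
          refine Finset.sum_congr rfl fun q _ => ?_
          rw [Matrix.updateRow_ne (Finset.ne_of_mem_erase hp)]
        · refine Finset.sum_congr rfl fun q _ => ?_
          rw [Matrix.updateRow_self]
      rw [h2]
      ring
    rw [hres, hreg, hC]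
    ring
  -- identify the two losses
  have hA_eq : A = Function.update A n ((A n).updateRow r (A n r)) := by
    funext m
    by_cases hm : m = n
    · subst hm; rw [Function.update_self, Matrix.updateRow_eq_self]
    · rw [Function.update_of_ne hm]
  have hL' : tuckerLoss I J Ω X G A' lam
      = ((∑ i ∈ Ωr, (X i - ∑ jn, astar jn * δ i jn) ^ 2) + lam * ∑ q, astar q ^ 2) + C := by
    rw [hA']; exact decomp astar
  have hL : tuckerLoss I J Ω X G A lam
      = ((∑ i ∈ Ωr, (X i - ∑ jn, A n r jn * δ i jn) ^ 2) + lam * ∑ q, A n r q ^ 2) + C := by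
    conv_lhs => rw [hA_eq]
    exact decomp (A n r)
  -- quadratic expansion of the row-dependent part
  have fexp : ∀ a : Fin (J n) → ℝ,
      (∑ i ∈ Ωr, (X i - ∑ jn, a jn * δ i jn) ^ 2) + lam * ∑ q, a q ^ 2
        = (∑ i ∈ Ωr, X i ^ 2) + (a ⬝ᵥ M.mulVec a - 2 * (a ⬝ᵥ c)) := by
    intro a
    have hB : a ⬝ᵥ B.mulVec a = ∑ i ∈ Ωr, (∑ jn, a jn * δ i jn) ^ 2 := by
      rw [hBdef]
      exact dot_gram Ωr (fun i => δ i) a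
    have hMe : a ⬝ᵥ M.mulVec a = a ⬝ᵥ B.mulVec a + lam * ∑ q, a q ^ 2 := by
      rw [hMdef, Matrix.add_mulVec, dotProduct_add]
      congr 1
      rw [Matrix.smul_mulVec, Matrix.one_mulVec, dotProduct_smul]
      simp only [smul_eq_mul, dotProduct, Finset.mul_sum]
      refine Finset.sum_congr rfl fun q _ => by ring
    have hc : a ⬝ᵥ c = ∑ i ∈ Ωr, X i * ∑ jn, a jn * δ i jn := by
      simp only [hcdef, cvec, dotProduct, hδdef, ← hΩr, Finset.mul_sum]
      rw [Finset.sum_comm]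
      exact Finset.sum_congr rfl fun i _ =>
        Finset.sum_congr rfl fun jn _ => by ring
    have hexpand : ∑ i ∈ Ωr, (X i - ∑ jn, a jn * δ i jn) ^ 2
        = ∑ i ∈ Ωr, X i ^ 2 + ∑ i ∈ Ωr, (∑ jn, a jn * δ i jn) ^ 2
          - 2 * ∑ i ∈ Ωr, X i * ∑ jn, a jn * δ i jn := by
      rw [← Finset.sum_add_distrib, Finset.mul_sum, ← Finset.sum_sub_distrib]
      exact Finset.sum_congr rfl fun i _ => by ring
    rw [hexpand, hMe, hB, hc]
    ring
  -- symmetry and positive-semidefiniteness of M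
  have hBsym : ∀ j1 j2, B j1 j2 = B j2 j1 := fun j1 j2 =>
    Finset.sum_congr rfl fun i _ => mul_comm _ _
  have hMsym : Mᵀ = M := by
    ext j1 j2
    simp only [Matrix.transpose_apply, hMdef, Matrix.add_apply, Matrix.smul_apply,
      Matrix.one_apply, smul_eq_mul]
    rw [hBsym j2 j1]
    congr 1
    by_cases h : j1 = j2
    · subst h; rfl
    · rw [if_neg h, if_neg (Ne.symm h)]
  have hquad : ∀ v : Fin (J n) → ℝ,
      v ⬝ᵥ M.mulVec v = (∑ i ∈ Ωr, (∑ jn, v jn * δ i jn) ^ 2) + lam * ∑ q, v q ^ 2 := by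
    intro v
    have hB : v ⬝ᵥ B.mulVec v = ∑ i ∈ Ωr, (∑ jn, v jn * δ i jn) ^ 2 := by
      rw [hBdef]; exact dot_gram Ωr (fun i => δ i) v
    rw [hMdef, Matrix.add_mulVec, dotProduct_add, hB,
      Matrix.smul_mulVec, Matrix.one_mulVec, dotProduct_smul]
    congr 1
    simp only [smul_eq_mul, dotProduct, Finset.mul_sum]
    exact Finset.sum_congr rfl fun q _ => by ring
  have hPSD : ∀ v : Fin (J n) → ℝ, 0 ≤ v ⬝ᵥ M.mulVec v := by
    intro v
    rw [hquad v]
    have h1 : 0 ≤ ∑ i ∈ Ωr, (∑ jn, v jn * δ i jn) ^ 2 :=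
      Finset.sum_nonneg fun i _ => sq_nonneg _
    have h2 : 0 ≤ ∑ q, v q ^ 2 := Finset.sum_nonneg fun q _ => sq_nonneg _
    nlinarith
  -- M is positive definite, hence invertible, hence M astar = c
  have hPD : M.PosDef := by
    have hherm : Mᴴ = M := by
      have : Mᴴ = Mᵀ := by
        ext j1 j2
        simp [Matrix.conjTranspose_apply, Matrix.transpose_apply]
      rw [this, hMsym]
    rw [Matrix.posDef_iff_dotProduct_mulVec]
    refine ⟨hherm, ?_⟩
    intro x hx
    have hst : (star x) ⬝ᵥ M.mulVec x = x ⬝ᵥ M.mulVec x := by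
      simp [star_trivial]
    rw [hst, hquad x]
    have h1 : 0 ≤ ∑ i ∈ Ωr, (∑ jn, x jn * δ i jn) ^ 2 :=
      Finset.sum_nonneg fun i _ => sq_nonneg _
    have h2 : 0 < ∑ q, x q ^ 2 := sq_sum_pos x hx
    nlinarith
  have hMastar : M.mulVec astar = c := by
    rw [hastar, Matrix.mulVec_mulVec,
      Matrix.mul_nonsing_inv M (isUnit_iff_ne_zero.mpr (ne_of_gt hPD.det_pos)),
      Matrix.one_mulVec]
  -- conclude
  have key := quad_min_s9 M hMsym hPSD c (A n r) astar hMastar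
  rw [hL', hL, fexp astar, fexp (A n r)]
  linarith
end

section
/- (Finite update sequences never increase the loss.) Assume λ > 0. Let (A_0^(1),…,A_0^(N)), (A_1^(1),…,A_1^(N)), …, (A_T^(1),…,A_T^(N)) be a finite sequence of tuples of factor matrices such that for each step t, the tuple at step t+1 is obtained from the tuple at step t by replacing the i_n-th row of one factor matrix A_t^(n) (for some mode n and some row index i_n) with the optimal row a* = (B^{(n)}_{i_n} + λ I_{J_n})^{-1} c^{(n)}_{i_n} computed from the step-t quantities, all other entries unchanged. Then L(G, A_T^(1),…,A_T^(N)) ≤ L(G, A_0^(1),…,A_0^(N)). -/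
open Finset Matrix

lemma quad_min_general {m κ : Type*} [Fintype κ] [DecidableEq κ]
    (S : Finset m) (X : m → ℝ) (δ : m → κ → ℝ) (lam : ℝ) (hlam : 0 < lam)
    (B : Matrix κ κ ℝ) (hB : B = fun j1 j2 => ∑ i ∈ S, δ i j1 * δ i j2)
    (c : κ → ℝ) (hc : c = fun j => ∑ i ∈ S, X i * δ i j)
    (a : κ → ℝ) :
    ((∑ i ∈ S, (X i - ∑ j, δ i j * ((B + lam • 1)⁻¹.mulVec c j)) ^ 2)
        + lam * ∑ q, ((B + lam • 1)⁻¹.mulVec c q) ^ 2)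
      ≤ (∑ i ∈ S, (X i - ∑ j, δ i j * a j) ^ 2) + lam * ∑ q, a q ^ 2 := by
  set M : Matrix κ κ ℝ := B + lam • 1 with hM
  -- quadratic form identity
  have hq : ∀ x : κ → ℝ, x ⬝ᵥ M.mulVec x
      = (∑ i ∈ S, (∑ j, δ i j * x j) ^ 2) + lam * ∑ q, x q ^ 2 := by
    intro x
    have h1 : x ⬝ᵥ M.mulVec x = x ⬝ᵥ B.mulVec x + lam * ∑ q, x q ^ 2 := by
      simp only [hM, Matrix.add_mulVec, Matrix.smul_mulVec, Matrix.one_mulVec,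
        dotProduct, sq, Finset.mul_sum]
      rw [← Finset.sum_add_distrib]
      exact Finset.sum_congr rfl fun q _ => by
        simp only [Pi.add_apply, Pi.smul_apply, smul_eq_mul]; ring
    have h2 : x ⬝ᵥ B.mulVec x = ∑ i ∈ S, (∑ j, δ i j * x j) ^ 2 := by
      have expand : x ⬝ᵥ B.mulVec x
          = ∑ j1, ∑ j2, ∑ i ∈ S, (δ i j1 * x j1) * (δ i j2 * x j2) := by
        simp only [dotProduct, Matrix.mulVec, dotProduct, hB, Finset.mul_sum,
          Finset.sum_mul]
        exact Finset.sum_congr rfl fun j1 _ => Finset.sum_congr rfl fun j2 _ =>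
          Finset.sum_congr rfl fun i _ => by ring
      rw [expand]
      calc ∑ j1, ∑ j2, ∑ i ∈ S, (δ i j1 * x j1) * (δ i j2 * x j2)
          = ∑ j1, ∑ i ∈ S, ∑ j2, (δ i j1 * x j1) * (δ i j2 * x j2) :=
            Finset.sum_congr rfl fun j1 _ => Finset.sum_comm
        _ = ∑ i ∈ S, ∑ j1, ∑ j2, (δ i j1 * x j1) * (δ i j2 * x j2) := Finset.sum_comm
        _ = ∑ i ∈ S, (∑ j, δ i j * x j) ^ 2 :=
            Finset.sum_congr rfl fun i _ => by rw [sq, Finset.sum_mul_sum]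
    rw [h1, h2]
  -- nonnegativity of the quadratic form
  have hq_nonneg : ∀ x : κ → ℝ, 0 ≤ x ⬝ᵥ M.mulVec x := by
    intro x
    rw [hq]
    have := Finset.sum_nonneg (fun i (_ : i ∈ S) => sq_nonneg (∑ j, δ i j * x j))
    have h2 : (0:ℝ) ≤ lam * ∑ q, x q ^ 2 :=
      mul_nonneg hlam.le (Finset.sum_nonneg fun q _ => sq_nonneg _)
    linarith
  -- symmetry
  have hsymm : ∀ j1 j2, M j1 j2 = M j2 j1 := by
    intro j1 j2
    simp only [hM, Matrix.add_apply, Matrix.smul_apply, Matrix.one_apply, smul_eq_mul]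
    rw [hB]
    have hif : (if j1 = j2 then (1:ℝ) else 0) = if j2 = j1 then 1 else 0 := by
      simp [eq_comm]
    rw [hif]
    exact congrArg₂ (· + ·) (Finset.sum_congr rfl fun i _ => mul_comm _ _) rfl
  have hswap : ∀ u v : κ → ℝ, u ⬝ᵥ M.mulVec v = v ⬝ᵥ M.mulVec u := by
    intro u v
    simp only [dotProduct, Matrix.mulVec, dotProduct, Finset.mul_sum]
    rw [Finset.sum_comm]
    exact Finset.sum_congr rfl fun j1 _ => Finset.sum_congr rfl fun j2 _ => by
      rw [hsymm j2 j1]; ring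
  -- positive definiteness
  have hpd : M.PosDef := by
    rw [Matrix.posDef_iff_dotProduct_mulVec]
    constructor
    · ext j1 j2
      simp only [Matrix.conjTranspose_apply, star_trivial]
      exact hsymm j2 j1
    · intro x hx
      have hx2 : 0 < ∑ q, x q ^ 2 := by
        rcases Function.ne_iff.1 hx with ⟨q, hq'⟩
        exact Finset.sum_pos' (fun q _ => sq_nonneg _)
          ⟨q, Finset.mem_univ q, pow_two_pos_of_ne_zero hq'⟩
      have : star x ⬝ᵥ M.mulVec x = x ⬝ᵥ M.mulVec x := by
        simp [star_trivial]
      rw [this, hq]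
      have := Finset.sum_nonneg (fun i (_ : i ∈ S) => sq_nonneg (∑ j, δ i j * x j))
      have h2 : (0:ℝ) < lam * ∑ q, x q ^ 2 := mul_pos hlam hx2
      linarith
  -- M * M⁻¹ = 1 and M a* = c
  have hMc : M.mulVec (M⁻¹.mulVec c) = c := by
    rw [Matrix.mulVec_mulVec, Matrix.mul_nonsing_inv M (isUnit_iff_ne_zero.2 hpd.det_pos.ne'),
      Matrix.one_mulVec]
  set astar : κ → ℝ := M⁻¹.mulVec c with hastar
  -- c ⬝ᵥ x identity
  have hcd : ∀ x : κ → ℝ, c ⬝ᵥ x = ∑ i ∈ S, X i * ∑ j, δ i j * x j := by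
    intro x
    simp only [dotProduct, hc, Finset.sum_mul, Finset.mul_sum]
    rw [Finset.sum_comm]
    exact Finset.sum_congr rfl fun i _ => Finset.sum_congr rfl fun j _ => by ring
  -- loss as quadratic
  have hg : ∀ x : κ → ℝ,
      (∑ i ∈ S, (X i - ∑ j, δ i j * x j) ^ 2) + lam * ∑ q, x q ^ 2
        = (∑ i ∈ S, X i ^ 2) - 2 * (c ⬝ᵥ x) + x ⬝ᵥ M.mulVec x := by
    intro x
    rw [hq, hcd]
    have : ∀ i ∈ S, (X i - ∑ j, δ i j * x j) ^ 2
        = X i ^ 2 - 2 * (X i * ∑ j, δ i j * x j) + (∑ j, δ i j * x j) ^ 2 := by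
      intro i _; ring
    rw [Finset.sum_congr rfl this]
    rw [Finset.sum_add_distrib, Finset.sum_sub_distrib, ← Finset.mul_sum]
    ring
  -- key: c ⬝ᵥ x = astar ⬝ᵥ M x
  have hcx : ∀ x : κ → ℝ, c ⬝ᵥ x = astar ⬝ᵥ M.mulVec x := by
    intro x
    rw [← hswap x astar]
    conv_lhs => rw [← hMc]
    exact dotProduct_comm _ _
  have key : ((∑ i ∈ S, (X i - ∑ j, δ i j * a j) ^ 2) + lam * ∑ q, a q ^ 2)
      - ((∑ i ∈ S, (X i - ∑ j, δ i j * astar j) ^ 2) + lam * ∑ q, astar q ^ 2)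
      = (a - astar) ⬝ᵥ M.mulVec (a - astar) := by
    rw [hg a, hg astar, hcx a, hcx astar]
    have expand : (a - astar) ⬝ᵥ M.mulVec (a - astar)
        = a ⬝ᵥ M.mulVec a - a ⬝ᵥ M.mulVec astar - astar ⬝ᵥ M.mulVec a
          + astar ⬝ᵥ M.mulVec astar := by
      simp only [Matrix.mulVec_sub, sub_dotProduct, dotProduct_sub]
      ring
    rw [expand, hswap a astar]
    ring
  have := hq_nonneg (a - astar)
  rw [← key] at this
  linarith

lemma tucker_decomp {N : ℕ} (I J : Fin N → ℕ)
    (Ω : Finset ((k : Fin N) → Fin (I k)))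
    (X : ((k : Fin N) → Fin (I k)) → ℝ)
    (G : ((k : Fin N) → Fin (J k)) → ℝ)
    (A : (n : Fin N) → Matrix (Fin (I n)) (Fin (J n)) ℝ) (lam : ℝ)
    (n : Fin N) (r : Fin (I n)) (a : Fin (J n) → ℝ) :
    tuckerLoss I J Ω X G (Function.update A n ((A n).updateRow r a)) lam
      = ((∑ i ∈ Ω.filter (fun i => ¬ i n = r),
            (X i - ∑ j : (k : Fin N) → Fin (J k), G j * ∏ m, A m (i m) (j m)) ^ 2)
          + lam * ((∑ m ∈ Finset.univ.erase n, ∑ p, ∑ q, A m p q ^ 2)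
              + ∑ p ∈ Finset.univ.erase r, ∑ q, A n p q ^ 2))
        + ((∑ i ∈ Ω.filter (fun i => i n = r),
              (X i - ∑ jn, deltaVec I J G A n i jn * a jn) ^ 2)
            + lam * ∑ q, a q ^ 2) := by
  set A' := Function.update A n ((A n).updateRow r a) with hA'
  have hmodel : ∀ i : (k : Fin N) → Fin (I k), i n = r →
      (∑ j : (k : Fin N) → Fin (J k), G j * ∏ m, A' m (i m) (j m))
        = ∑ jn, deltaVec I J G A n i jn * a jn := by
    intro i hi
    have step1 : ∀ j : (k : Fin N) → Fin (J k),
        G j * ∏ m, A' m (i m) (j m)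
          = (G j * ∏ k ∈ Finset.univ.erase n, A k (i k) (j k)) * a (j n) := by
      intro j
      rw [← Finset.mul_prod_erase Finset.univ _ (Finset.mem_univ n)]
      have h1 : A' n (i n) (j n) = a (j n) := by
        rw [hA', Function.update_self, hi, Matrix.updateRow_self]
      have h2 : ∏ k ∈ Finset.univ.erase n, A' k (i k) (j k)
          = ∏ k ∈ Finset.univ.erase n, A k (i k) (j k) :=
        Finset.prod_congr rfl fun k hk => by
          rw [hA', Function.update_of_ne (Finset.ne_of_mem_erase hk)]
      rw [h1, h2]; ring
    rw [Finset.sum_congr rfl (fun j _ => step1 j),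
      ← Finset.sum_fiberwise Finset.univ (fun j : (k : Fin N) → Fin (J k) => j n)
        (fun j => (G j * ∏ k ∈ Finset.univ.erase n, A k (i k) (j k)) * a (j n))]
    refine Finset.sum_congr rfl fun jn _ => ?_
    rw [deltaVec, Finset.sum_mul]
    refine Finset.sum_congr rfl fun j' hj' => ?_
    rw [(Finset.mem_filter.1 hj').2]
  have hmodel' : ∀ i : (k : Fin N) → Fin (I k), ¬ i n = r →
      ∀ j : (k : Fin N) → Fin (J k),
        (∏ m, A' m (i m) (j m)) = ∏ m, A m (i m) (j m) := by
    intro i hi j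
    refine Finset.prod_congr rfl fun m _ => ?_
    by_cases hm : m = n
    · subst hm
      rw [hA', Function.update_self, Matrix.updateRow_ne hi]
    · rw [hA', Function.update_of_ne hm]
  have hreg : (∑ m, ∑ p, ∑ q, A' m p q ^ 2)
      = ((∑ m ∈ Finset.univ.erase n, ∑ p, ∑ q, A m p q ^ 2)
          + ∑ p ∈ Finset.univ.erase r, ∑ q, A n p q ^ 2) + ∑ q, a q ^ 2 := by
    rw [← Finset.add_sum_erase Finset.univ _ (Finset.mem_univ n)]
    have h1 : (∑ p, ∑ q, A' n p q ^ 2)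
        = (∑ p ∈ Finset.univ.erase r, ∑ q, A n p q ^ 2) + ∑ q, a q ^ 2 := by
      rw [← Finset.add_sum_erase Finset.univ _ (Finset.mem_univ r)]
      have h2 : (∑ q, A' n r q ^ 2) = ∑ q, a q ^ 2 := by
        refine Finset.sum_congr rfl fun q _ => ?_
        rw [hA', Function.update_self, Matrix.updateRow_self]
      have h3 : (∑ p ∈ Finset.univ.erase r, ∑ q, A' n p q ^ 2)
          = ∑ p ∈ Finset.univ.erase r, ∑ q, A n p q ^ 2 := by
        refine Finset.sum_congr rfl fun p hp => Finset.sum_congr rfl fun q _ => ?_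
        rw [hA', Function.update_self, Matrix.updateRow_ne (Finset.ne_of_mem_erase hp)]
      rw [h2, h3]; ring
    have h4 : (∑ m ∈ Finset.univ.erase n, ∑ p, ∑ q, A' m p q ^ 2)
        = ∑ m ∈ Finset.univ.erase n, ∑ p, ∑ q, A m p q ^ 2 := by
      refine Finset.sum_congr rfl fun m hm => ?_
      rw [hA', Function.update_of_ne (Finset.ne_of_mem_erase hm)]
    rw [h1, h4]; ring
  rw [tuckerLoss, ← Finset.sum_filter_add_sum_filter_not Ω (fun i => i n = r), hreg]
  have h5 : (∑ i ∈ Ω.filter (fun i => i n = r),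
      (X i - ∑ j : (k : Fin N) → Fin (J k), G j * ∏ m, A' m (i m) (j m)) ^ 2)
      = ∑ i ∈ Ω.filter (fun i => i n = r),
          (X i - ∑ jn, deltaVec I J G A n i jn * a jn) ^ 2 := by
    refine Finset.sum_congr rfl fun i hi => ?_
    rw [hmodel i (Finset.mem_filter.1 hi).2]
  have h6 : (∑ i ∈ Ω.filter (fun i => ¬ i n = r),
      (X i - ∑ j : (k : Fin N) → Fin (J k), G j * ∏ m, A' m (i m) (j m)) ^ 2)
      = ∑ i ∈ Ω.filter (fun i => ¬ i n = r),
          (X i - ∑ j : (k : Fin N) → Fin (J k), G j * ∏ m, A m (i m) (j m)) ^ 2 := by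
    refine Finset.sum_congr rfl fun i hi => ?_
    rw [Finset.sum_congr rfl fun j _ =>
      congrArg (G j * ·) (hmodel' i (Finset.mem_filter.1 hi).2 j)]
  rw [h5, h6]; ring

lemma ptucker_step_le {N : ℕ} (I J : Fin N → ℕ)
    (Ω : Finset ((k : Fin N) → Fin (I k)))
    (X : ((k : Fin N) → Fin (I k)) → ℝ)
    (G : ((k : Fin N) → Fin (J k)) → ℝ)
    (A : (n : Fin N) → Matrix (Fin (I n)) (Fin (J n)) ℝ)
    (lam : ℝ) (hlam : 0 < lam) (n : Fin N) (r : Fin (I n)) :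
    tuckerLoss I J Ω X G (Function.update A n ((A n).updateRow r
        ((Bmat I J Ω G A n r + lam • (1 : Matrix (Fin (J n)) (Fin (J n)) ℝ))⁻¹.mulVec
          (cvec I J Ω X G A n r)))) lam
      ≤ tuckerLoss I J Ω X G A lam := by
  have h1 := tucker_decomp I J Ω X G A lam n r
    ((Bmat I J Ω G A n r + lam • (1 : Matrix (Fin (J n)) (Fin (J n)) ℝ))⁻¹.mulVec
      (cvec I J Ω X G A n r))
  have h2 := tucker_decomp I J Ω X G A lam n r (A n r)
  have h3 : Function.update A n ((A n).updateRow r (A n r)) = A := by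
    rw [Matrix.updateRow_eq_self, Function.update_eq_self]
  rw [h3] at h2
  have hB : Bmat I J Ω G A n r = fun j1 j2 =>
      ∑ i ∈ Ω.filter (fun i => i n = r),
        deltaVec I J G A n i j1 * deltaVec I J G A n i j2 := rfl
  have hc : cvec I J Ω X G A n r = fun j =>
      ∑ i ∈ Ω.filter (fun i => i n = r), X i * deltaVec I J G A n i j := rfl
  have h4 := quad_min_general (Ω.filter (fun i => i n = r)) X
    (fun i => deltaVec I J G A n i) lam hlam (Bmat I J Ω G A n r) hB
    (cvec I J Ω X G A n r) hc (A n r)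
  rw [h1, h2]
  linarith

/-- Finite update sequences never increase the loss: if each step of a
finite sequence of factor-matrix tuples replaces one row of one factor matrix with the
optimal row `a* = (B⁽ⁿ⁾_r + λ I)⁻¹ c⁽ⁿ⁾_r` computed from the current quantities, then the
final Tucker loss is at most the initial one. -/
theorem ptucker_update_sequence_monotone
    (N : ℕ) (hN : 0 < N) (I J : Fin N → ℕ) (hI : ∀ k, 0 < I k) (hJ : ∀ k, 0 < J k)
    (Ω : Finset ((k : Fin N) → Fin (I k)))
    (X : ((k : Fin N) → Fin (I k)) → ℝ)
    (G : ((k : Fin N) → Fin (J k)) → ℝ)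
    (lam : ℝ) (hlam : 0 < lam)
    (T : ℕ) (A : ℕ → (n : Fin N) → Matrix (Fin (I n)) (Fin (J n)) ℝ)
    (hstep : ∀ t < T, ∃ (n : Fin N) (r : Fin (I n)),
      A (t + 1) = Function.update (A t) n ((A t n).updateRow r
        ((Bmat I J Ω G (A t) n r + lam • (1 : Matrix (Fin (J n)) (Fin (J n)) ℝ))⁻¹.mulVec
          (cvec I J Ω X G (A t) n r)))) :
    tuckerLoss I J Ω X G (A T) lam ≤ tuckerLoss I J Ω X G (A 0) lam := by
  have mono : ∀ t, t ≤ T → tuckerLoss I J Ω X G (A t) lam ≤ tuckerLoss I J Ω X G (A 0) lam := by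
    intro t
    induction t with
    | zero => intro _; exact le_rfl
    | succ t ih =>
      intro h
      obtain ⟨n, r, hA⟩ := hstep t (by omega)
      rw [hA]
      exact le_trans (ptucker_step_le I J Ω X G (A t) lam hlam n r) (ih (by omega))
  exact mono T le_rfl
end
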